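/- Let nat be a primitive type with constructors z : nat and s : nat → nat. In eqLJω, the formulas ∀x∀y. (s x = s y → x = y) and ∀x. (s x = z → ⊥) are provable. In particular, with ∀x. x = x and the symmetry/transitivity of equality, eqLJω proves the first four Peano axioms. -/

import Mathlib

/-- First-order terms: de Bruijn variables (eigenvariables) and
    application of a function symbol (a `Nat` code) to arguments. -/
inductive Tm : Type where
  | var : Nat → Tm
  | app : Nat → List Tm → Tm

namespace Tm

/-- Substitution for variables. -/
def subst (σ : Nat → Tm) : Tm → Tm
  | var n => σ n
  | app f ts => app f (ts.attach.map (fun t => subst σ t.1))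
  decreasing_by have := List.sizeOf_lt_of_mem t.2; simp_wf; omega

/-- All free variables are `< k`. -/
inductive Bv : Nat → Tm → Prop where
  | var : ∀ {k n}, n < k → Bv k (var n)
  | app : ∀ {k f ts}, (∀ t ∈ ts, Bv k t) → Bv k (app f ts)

end Tm

/-- `σ` is a unifier of `s` and `t`. -/
def Unifies (σ : Nat → Tm) (s t : Tm) : Prop := s.subst σ = t.subst σ

/-- `U` is a complete set of unifiers of `s` and `t`. -/
def IsCSU (U : Set (Nat → Tm)) (s t : Tm) : Prop :=
  (∀ σ ∈ U, Unifies σ s t) ∧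
  ∀ θ, Unifies θ s t → ∃ σ ∈ U, ∃ δ, ∀ n, (σ n).subst δ = θ n

/-- Formulas of eqLJω (first-order fragment), with de Bruijn binders. -/
inductive Fm : Type where
  | top | bot
  | atom : Nat → List Tm → Fm
  | eq : Tm → Tm → Fm
  | and : Fm → Fm → Fm
  | imp : Fm → Fm → Fm
  | all : Fm → Fm
  | ex : Fm → Fm

namespace Fm

/-- Lift a substitution under a binder. -/
def up (σ : Nat → Tm) : Nat → Tm
  | 0 => .var 0
  | n + 1 => (σ n).subst (fun k => .var (k + 1))

/-- Apply a substitution to a formula. -/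
def substF (σ : Nat → Tm) : Fm → Fm
  | top => top
  | bot => bot
  | atom p ts => atom p (ts.map (Tm.subst σ))
  | eq s t => eq (s.subst σ) (t.subst σ)
  | and A B => and (A.substF σ) (B.substF σ)
  | imp A B => imp (A.substF σ) (B.substF σ)
  | all A => all (A.substF (up σ))
  | ex A => ex (A.substF (up σ))

/-- Shift all free variables up by one. -/
def shift (A : Fm) : Fm := A.substF (fun n => .var (n + 1))

/-- Instantiate de Bruijn variable 0 with `t`. -/
def subst0 (t : Tm) (A : Fm) : Fm :=
  A.substF (fun n => match n with | 0 => t | n + 1 => .var n)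

/-- All free variables are `< k`. -/
inductive Bv : Nat → Fm → Prop where
  | top : Bv k top
  | bot : Bv k bot
  | atom : (∀ t ∈ ts, Tm.Bv k t) → Bv k (atom p ts)
  | eq : Tm.Bv k s → Tm.Bv k t → Bv k (eq s t)
  | and : Bv k A → Bv k B → Bv k (and A B)
  | imp : Bv k A → Bv k B → Bv k (imp A B)
  | all : Bv (k + 1) A → Bv k (all A)
  | ex : Bv (k + 1) A → Bv k (ex A)

end Fm

/-- The sequent calculus eqLJω: intuitionistic LJ together with the
    rules `=R` (reflexivity on the right) and `=L` (case analysis over a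
    complete set of unifiers on the left). -/
inductive Prv : List Fm → Fm → Prop where
  | init : Fm.atom p ts ∈ Γ → Prv Γ (.atom p ts)
  | topR : Prv Γ .top
  | botL : Fm.bot ∈ Γ → Prv Γ C
  | andR : Prv Γ A → Prv Γ B → Prv Γ (.and A B)
  | andL : Fm.and A B ∈ Γ → Prv (A :: B :: Γ) C → Prv Γ C
  | impR : Prv (A :: Γ) B → Prv Γ (.imp A B)
  | impL : Fm.imp A B ∈ Γ → Prv Γ A → Prv (B :: Γ) C → Prv Γ C
  | allR : Prv (Γ.map Fm.shift) A → Prv Γ (.all A)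
  | allL : Fm.all A ∈ Γ → Prv (A.subst0 t :: Γ) C → Prv Γ C
  | exR : Prv Γ (A.subst0 t) → Prv Γ (.ex A)
  | exL : Fm.ex A ∈ Γ → Prv (A :: Γ.map Fm.shift) C.shift → Prv Γ C
  | eqR : Prv Γ (.eq t t)
  | eqL : Fm.eq s t ∈ Γ → IsCSU U s t →
      (∀ σ ∈ U, Prv (Γ.map (Fm.substF σ)) (C.substF σ)) → Prv Γ C

/-- Zero. -/
def zTm : Tm := .app 0 []
/-- Successor. -/
def sTm (t : Tm) : Tm := .app 1 [t]


-- Auxiliary lemmas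

lemma subst_var (σ : Nat → Tm) (n : Nat) : Tm.subst σ (.var n) = σ n := by
  simp [Tm.subst]

lemma subst_z (σ : Nat → Tm) : Tm.subst σ zTm = zTm := by
  simp [Tm.subst, zTm]

lemma subst_s (σ : Nat → Tm) (t : Tm) :
    Tm.subst σ (sTm t) = sTm (Tm.subst σ t) := by
  simp [Tm.subst, sTm, List.attach]

/-- In eqLJω, successor is injective and never zero; together
    with reflexivity, symmetry and transitivity of equality, eqLJω proves
    the first four Peano axioms. -/
theorem eqLJ_peano_axioms :
    Prv [] (.all (.all (.imp (.eq (sTm (.var 1)) (sTm (.var 0)))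
      (.eq (.var 1) (.var 0))))) ∧
    Prv [] (.all (.imp (.eq (sTm (.var 0)) zTm) .bot)) ∧
    Prv [] (.all (.eq (.var 0) (.var 0))) ∧
    Prv [] (.all (.all (.imp (.eq (.var 1) (.var 0)) (.eq (.var 0) (.var 1))))) ∧
    Prv [] (.all (.all (.all
      (.imp (.eq (.var 2) (.var 1))
        (.imp (.eq (.var 1) (.var 0)) (.eq (.var 2) (.var 0))))))) := by
  refine ⟨?_, ?_, ?_, ?_, ?_⟩
  · -- injectivity of s
    apply Prv.allR; apply Prv.allR; apply Prv.impR
    refine Prv.eqL (U := {fun n => if n = 1 then .var 0 else .var n})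
      List.mem_cons_self ⟨?_, ?_⟩ ?_
    · intro σ hσ
      simp only [Set.mem_singleton_iff] at hσ; subst hσ
      simp [Unifies, subst_s, subst_var]
    · intro θ hθ
      simp only [Unifies, subst_s, subst_var] at hθ
      injection hθ with _ h
      injection h with h1
      refine ⟨_, rfl, θ, ?_⟩
      intro n
      by_cases hn : n = 1 <;> simp [hn, subst_var, h1]
    · intro σ hσ
      simp only [Set.mem_singleton_iff] at hσ; subst hσ
      simp only [Fm.substF, subst_var]
      exact Prv.eqR
  · -- s x ≠ z
    apply Prv.allR; apply Prv.impR
    refine Prv.eqL (U := ∅) List.mem_cons_self ⟨?_, ?_⟩ ?_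
    · intro σ hσ; exact absurd hσ (Set.notMem_empty σ)
    · intro θ hθ
      exfalso
      simp only [Unifies, subst_s, subst_z] at hθ
      simp [sTm, zTm] at hθ
    · intro σ hσ; exact absurd hσ (Set.notMem_empty σ)
  · -- reflexivity
    apply Prv.allR; exact Prv.eqR
  · -- symmetry
    apply Prv.allR; apply Prv.allR; apply Prv.impR
    refine Prv.eqL (U := {fun n => if n = 1 then .var 0 else .var n})
      List.mem_cons_self ⟨?_, ?_⟩ ?_
    · intro σ hσ
      simp only [Set.mem_singleton_iff] at hσ; subst hσ
      simp [Unifies, subst_var]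
    · intro θ hθ
      simp only [Unifies, subst_var] at hθ
      refine ⟨_, rfl, θ, ?_⟩
      intro n
      by_cases hn : n = 1 <;> simp [hn, subst_var, hθ]
    · intro σ hσ
      simp only [Set.mem_singleton_iff] at hσ; subst hσ
      simp only [Fm.substF, subst_var]
      exact Prv.eqR
  · -- transitivity
    apply Prv.allR; apply Prv.allR; apply Prv.allR
    apply Prv.impR; apply Prv.impR
    refine Prv.eqL (U := {fun n => if n = 2 then .var 1 else .var n})
      (s := .var 2) (t := .var 1)
      (List.mem_cons_of_mem _ List.mem_cons_self) ⟨?_, ?_⟩ ?_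
    · intro σ hσ
      simp only [Set.mem_singleton_iff] at hσ; subst hσ
      simp [Unifies, subst_var]
    · intro θ hθ
      simp only [Unifies, subst_var] at hθ
      refine ⟨_, rfl, θ, ?_⟩
      intro n
      by_cases hn : n = 2 <;> simp [hn, subst_var, hθ]
    · intro σ hσ
      simp only [Set.mem_singleton_iff] at hσ; subst hσ
      simp only [List.map, Fm.substF, subst_var]
      -- context: [eq (var 1) (var 0), eq (var 1) (var 1)], goal: eq (var 1) (var 0)
      refine Prv.eqL (U := {fun n => if n = 1 then .var 0 else .var n})
        (s := .var 1) (t := .var 0)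
        List.mem_cons_self ⟨?_, ?_⟩ ?_
      · intro σ hσ
        simp only [Set.mem_singleton_iff] at hσ; subst hσ
        simp [Unifies, subst_var]
      · intro θ hθ
        simp only [Unifies, subst_var] at hθ
        refine ⟨_, rfl, θ, ?_⟩
        intro n
        by_cases hn : n = 1 <;> simp [hn, subst_var, hθ]
      · intro σ hσ
        simp only [Set.mem_singleton_iff] at hσ; subst hσ
        have : Fm.substF (fun n => if n = 1 then Tm.var 0 else Tm.var n)
            (Fm.eq (if True then Tm.var 1 else Tm.var 2)
              (if 0 = 2 then Tm.var 1 else Tm.var 0))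
            = Fm.eq (Tm.var 0) (Tm.var 0) := by
          simp [Fm.substF, subst_var]
        rw [this]
        exact Prv.eqR
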